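/- arXiv:1710.03398 — 7 statements merged into one kernel-verified Lean document; each statement's English description precedes it below -/
import Mathlib

section
/- Let N ≥ 2 and n ≥ 1, and let V̂ ∈ ℝ^{N×(N−1)} satisfy V̂ᵀV̂ = I_{N−1} and V̂ᵀ1_N = 0. Then for any sequence x : ℕ → ℝ^{Nn}, writing x_i(k) ∈ ℝⁿ for the i-th block of x(k) (i = 1,…,N), the following are equivalent: (i) for all i, j ∈ {1,…,N}, x_i(k) − x_j(k) → 0 as k → ∞; (ii) (V̂ᵀ ⊗ I_n) x(k) → 0 as k → ∞. -/
open Matrix Filter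
open scoped Kronecker

/-- Lemma 1 (trajectory-wise): state consensus is equivalent to convergence
to zero of the dimension-reduced state `(V̂ᵀ ⊗ I_n) x(k)`. -/
theorem stmt0 (N n : ℕ) (hN : 2 ≤ N) (hn : 1 ≤ n)
    (V : Matrix (Fin N) (Fin (N - 1)) ℝ)
    (hV : Vᵀ * V = 1) (hV1 : Vᵀ *ᵥ (fun _ => 1) = 0)
    (x : ℕ → Fin N × Fin n → ℝ) :
    (∀ i j : Fin N,
      Tendsto (fun k => fun p : Fin n => x k (i, p) - x k (j, p)) atTop (nhds 0))
      ↔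
    Tendsto (fun k => (Vᵀ ⊗ₖ (1 : Matrix (Fin n) (Fin n) ℝ)) *ᵥ x k)
      atTop (nhds 0) := by
  have hNpos : (0:ℝ) < (N:ℝ) := by
    have : 0 < N := lt_of_lt_of_le (by norm_num) hN
    exact_mod_cast this
  -- entry formula for the kronecker mulVec
  have hentry : ∀ k (a : Fin (N-1)) (p : Fin n),
      ((Vᵀ ⊗ₖ (1 : Matrix (Fin n) (Fin n) ℝ)) *ᵥ x k) (a, p)
        = ∑ i : Fin N, V i a * x k (i, p) := by
    intro k a p
    simp [Matrix.mulVec, dotProduct, Fintype.sum_prod_type,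
      Matrix.one_apply, mul_ite, ite_mul, mul_one, mul_zero, zero_mul,
      Finset.sum_ite_eq, Finset.sum_ite_eq']
  -- column sums of V vanish
  have hsum0 : ∀ a : Fin (N-1), ∑ i : Fin N, V i a = 0 := by
    intro a
    have := congrFun hV1 a
    simpa [Matrix.mulVec, dotProduct] using this
  -- orthonormality of columns
  have hVV : ∀ a b : Fin (N-1), ∑ i : Fin N, V i a * V i b
      = if a = b then (1:ℝ) else 0 := by
    intro a b
    have := congrFun (congrFun hV a) b
    simpa [Matrix.mul_apply, Matrix.one_apply] using this
  -- the completed square matrix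
  set s : ℝ := Real.sqrt N with hs
  have hspos : 0 < s := Real.sqrt_pos.mpr hNpos
  have hss : s * s = (N:ℝ) := Real.mul_self_sqrt hNpos.le
  set W : Matrix (Fin N) (Fin (N-1) ⊕ Fin 1) ℝ :=
    fun i j => Sum.elim (V i) (fun _ => s⁻¹) j with hW
  have hWtW : Wᵀ * W = 1 := by
    ext j j'
    cases j with
    | inl a =>
      cases j' with
      | inl b =>
        simp only [Matrix.mul_apply, Matrix.transpose_apply]; simpa [hW, Matrix.mul_apply, Matrix.one_apply] using hVV a b
      | inr u =>
        have : ∑ i : Fin N, V i a * s⁻¹ = 0 := by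
          rw [← Finset.sum_mul, hsum0 a, zero_mul]
        simp only [Matrix.mul_apply, Matrix.transpose_apply]; simpa [hW, Matrix.mul_apply, Matrix.one_apply] using this
    | inr u =>
      cases j' with
      | inl b =>
        have : ∑ i : Fin N, s⁻¹ * V i b = 0 := by
          rw [← Finset.mul_sum, hsum0 b, mul_zero]
        simp only [Matrix.mul_apply, Matrix.transpose_apply]; simpa [hW, Matrix.mul_apply, Matrix.one_apply] using this
      | inr u' =>
        have : ∑ _i : Fin N, s⁻¹ * s⁻¹ = (1:ℝ) := by
          rw [Finset.sum_const, Finset.card_univ, Fintype.card_fin]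
          rw [← mul_inv, hss]
          rw [nsmul_eq_mul]
          field_simp
        have hu : u = u' := Subsingleton.elim u u'
        simp only [Matrix.mul_apply, Matrix.transpose_apply]; simpa [hW, Matrix.mul_apply, Matrix.one_apply, hu] using this
  have hEquiv : (Fin (N-1) ⊕ Fin 1) ≃ Fin N := by
    refine (finSumFinEquiv).trans (finCongr ?_)
    omega
  have hWWt : W * Wᵀ = 1 :=
    (Matrix.mul_eq_one_comm_of_equiv (A := Wᵀ) (B := W) hEquiv).mp hWtW
  -- the projection identity
  have hP : ∀ i j : Fin N, ∑ a : Fin (N-1), V i a * V j a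
      = (if i = j then (1:ℝ) else 0) - (N:ℝ)⁻¹ := by
    intro i j
    have := congrFun (congrFun hWWt i) j
    have h2 : (∑ a : Fin (N-1), V i a * V j a) + s⁻¹ * s⁻¹
        = if i = j then (1:ℝ) else 0 := by
      simp only [Matrix.mul_apply, Matrix.transpose_apply] at this; simpa [hW, Matrix.mul_apply, Fintype.sum_sum_type, Matrix.one_apply]
        using this
    have h3 : s⁻¹ * s⁻¹ = (N:ℝ)⁻¹ := by rw [← mul_inv, hss]
    rw [h3] at h2
    linarith
  constructor
  · -- (i) → (ii)
    intro h
    rw [tendsto_pi_nhds]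
    rintro ⟨a, p⟩
    have h0 : Tendsto (fun k => ∑ i : Fin N, V i a * (x k (i, p) - x k (⟨0, by omega⟩, p)))
        atTop (nhds 0) := by
      have : (0:ℝ) = ∑ i : Fin N, V i a * 0 := by simp
      rw [this]
      refine tendsto_finset_sum _ (fun i _ => ?_)
      have hi := h i ⟨0, by omega⟩
      rw [tendsto_pi_nhds] at hi
      have := (hi p).const_mul (V i a)
      simpa using this
    have heq : ∀ k, ((Vᵀ ⊗ₖ (1 : Matrix (Fin n) (Fin n) ℝ)) *ᵥ x k) (a, p)
        = ∑ i : Fin N, V i a * (x k (i, p) - x k (⟨0, by omega⟩, p)) := by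
      intro k
      rw [hentry k a p]
      rw [Finset.sum_congr rfl (fun i _ => mul_sub (V i a) _ _)]
      rw [Finset.sum_sub_distrib, ← Finset.sum_mul, hsum0 a, zero_mul, sub_zero]
    have : (fun k => ((Vᵀ ⊗ₖ (1 : Matrix (Fin n) (Fin n) ℝ)) *ᵥ x k) (a, p))
        = fun k => ∑ i : Fin N, V i a * (x k (i, p) - x k (⟨0, by omega⟩, p)) :=
      funext heq
    simpa [this] using h0
  · -- (ii) → (i)
    intro h i j
    rw [tendsto_pi_nhds]
    intro p
    have hy : ∀ a : Fin (N-1), Tendsto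
        (fun k => ((Vᵀ ⊗ₖ (1 : Matrix (Fin n) (Fin n) ℝ)) *ᵥ x k) (a, p))
        atTop (nhds 0) := by
      intro a
      rw [tendsto_pi_nhds] at h
      simpa using h (a, p)
    have key : ∀ k, x k (i, p) - x k (j, p)
        = ∑ a : Fin (N-1), (V i a - V j a)
            * ((Vᵀ ⊗ₖ (1 : Matrix (Fin n) (Fin n) ℝ)) *ᵥ x k) (a, p) := by
      intro k
      have : ∑ a : Fin (N-1), (V i a - V j a)
            * ((Vᵀ ⊗ₖ (1 : Matrix (Fin n) (Fin n) ℝ)) *ᵥ x k) (a, p)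
          = ∑ m : Fin N, (∑ a : Fin (N-1), (V i a - V j a) * V m a) * x k (m, p) := by
        simp only [hentry, Finset.mul_sum]
        rw [Finset.sum_comm]
        congr 1
        ext m
        rw [Finset.sum_mul]
        congr 1
        ext a
        ring
      rw [this]
      have hcoef : ∀ m : Fin N, ∑ a : Fin (N-1), (V i a - V j a) * V m a
          = (if i = m then (1:ℝ) else 0) - (if j = m then (1:ℝ) else 0) := by
        intro m
        have h1 := hP i m
        have h2 := hP j m
        calc ∑ a : Fin (N-1), (V i a - V j a) * V m a
            = (∑ a : Fin (N-1), V i a * V m a) - ∑ a : Fin (N-1), V j a * V m a := by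
              rw [← Finset.sum_sub_distrib]; congr 1; ext a; ring
          _ = _ := by rw [h1, h2]; ring
      rw [Finset.sum_congr rfl (fun m _ => by rw [hcoef m])]
      simp [sub_mul, Finset.sum_sub_distrib, ite_mul, Finset.sum_ite_eq]
    have h0 : Tendsto (fun k => ∑ a : Fin (N-1), (V i a - V j a)
        * ((Vᵀ ⊗ₖ (1 : Matrix (Fin n) (Fin n) ℝ)) *ᵥ x k) (a, p)) atTop (nhds 0) := by
      have : (0:ℝ) = ∑ a : Fin (N-1), (V i a - V j a) * 0 := by simp
      rw [this]
      exact tendsto_finset_sum _ (fun a _ => ((hy a).const_mul _))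
    have : (fun k => x k (i, p) - x k (j, p))
        = fun k => ∑ a : Fin (N-1), (V i a - V j a)
            * ((Vᵀ ⊗ₖ (1 : Matrix (Fin n) (Fin n) ℝ)) *ᵥ x k) (a, p) := funext key
    simpa [this] using h0
end

section
/- Let L ∈ ℝ^{N×N} and μ̄ > 0. If L 1_N = 0 and the symmetric matrix L + Lᵀ − μ̄ LᵀL is positive semidefinite, then Lᵀ 1_N = 0 (i.e., all column sums of L are also zero, even though the corresponding digraph need not be balanced). -/
open Matrix

/-- Remark 1 (first claim): if `L 1 = 0` and `L + Lᵀ − μ̄ LᵀL ⪰ 0` for some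
`μ̄ > 0`, then also `Lᵀ 1 = 0`, i.e., all column sums of `L` vanish. -/
theorem stmt2 (N : ℕ) (L : Matrix (Fin N) (Fin N) ℝ) (μb : ℝ) (hμb : 0 < μb)
    (hL1 : L *ᵥ (fun _ => 1) = 0)
    (hpsd : (L + Lᵀ - μb • (Lᵀ * L)).PosSemidef) :
    Lᵀ *ᵥ (fun _ => 1) = 0 := by
  set x : Fin N → ℝ := fun _ => 1
  have hMx : (L + Lᵀ - μb • (Lᵀ * L)) *ᵥ x = Lᵀ *ᵥ x := by
    simp [sub_mulVec, add_mulVec, smul_mulVec, ← mulVec_mulVec, hL1]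
  have hq : star x ⬝ᵥ (L + Lᵀ - μb • (Lᵀ * L)) *ᵥ x = 0 := by
    rw [hMx]
    have : x ⬝ᵥ Lᵀ *ᵥ x = L *ᵥ x ⬝ᵥ x := by
      rw [dotProduct_mulVec, vecMul_transpose, dotProduct_comm]
    simpa [this, hL1] using congrArg (fun v => v ⬝ᵥ x) hL1
  have := (hpsd.dotProduct_mulVec_zero_iff x).mp hq
  rw [hMx] at this
  exact this
end

section
/- Let L ∈ ℝ^{N×N} and μ̄ > 0 satisfy L 1_N = 0, Lᵀ 1_N = 0, and L + Lᵀ − μ̄ LᵀL positive semidefinite. Let V̂ ∈ ℝ^{N×(N−1)} satisfy V̂ᵀV̂ = I_{N−1} and V̂ᵀ1_N = 0, and set L̂ = V̂ᵀ L V̂. Then L̂ + L̂ᵀ − μ̄ L̂ᵀL̂ is positive semidefinite. -/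
open Matrix

/-- Remark 1 (second claim): Assumption (L) is inherited by the
dimension-reduced Laplacian `L̂ = V̂ᵀ L V̂`. -/
theorem stmt3 (N : ℕ) (L : Matrix (Fin N) (Fin N) ℝ) (μb : ℝ) (hμb : 0 < μb)
    (hL1 : L *ᵥ (fun _ => 1) = 0) (hLT1 : Lᵀ *ᵥ (fun _ => 1) = 0)
    (hpsd : (L + Lᵀ - μb • (Lᵀ * L)).PosSemidef)
    (V : Matrix (Fin N) (Fin (N - 1)) ℝ)
    (hV : Vᵀ * V = 1) (hV1 : Vᵀ *ᵥ (fun _ => 1) = 0)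
    (Lh : Matrix (Fin (N - 1)) (Fin (N - 1)) ℝ) (hLh : Lh = Vᵀ * L * V) :
    (Lh + Lhᵀ - μb • (Lhᵀ * Lh)).PosSemidef := by
  rw [posSemidef_iff_dotProduct_mulVec]
  constructor
  · show _ = _
    simp only [conjTranspose_sub, conjTranspose_add, conjTranspose_smul,
      conjTranspose_mul, transpose_add, transpose_sub, transpose_smul, transpose_mul,
      transpose_transpose, star_trivial, Matrix.conjTranspose_eq_transpose_of_trivial]
    abel
  · intro y
    simp only [star_trivial]
    set x := V *ᵥ y with hx
    -- dot product transfer lemma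
    have key : ∀ (u : Fin (N-1) → ℝ) (z : Fin N → ℝ),
        u ⬝ᵥ (Vᵀ *ᵥ z) = (V *ᵥ u) ⬝ᵥ z := by
      intro u z
      rw [dotProduct_mulVec, vecMul_transpose]
    have hVV : ∀ (u w : Fin (N-1) → ℝ), (V *ᵥ u) ⬝ᵥ (V *ᵥ w) = u ⬝ᵥ w := by
      intro u w
      rw [← key, mulVec_mulVec, hV, one_mulVec]
    have h4 : Lh *ᵥ y = Vᵀ *ᵥ (L *ᵥ x) := by
      simp only [hLh, ← mulVec_mulVec, hx]
    have h4' : Lhᵀ *ᵥ y = Vᵀ *ᵥ (Lᵀ *ᵥ x) := by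
      simp only [hLh, transpose_mul, transpose_transpose, ← mulVec_mulVec, hx]
    have h1 : y ⬝ᵥ (Lh *ᵥ y) = x ⬝ᵥ (L *ᵥ x) := by
      rw [h4, key]
    have h2 : y ⬝ᵥ (Lhᵀ *ᵥ y) = x ⬝ᵥ (Lᵀ *ᵥ x) := by
      rw [h4', key]
    have h3 : y ⬝ᵥ ((Lhᵀ * Lh) *ᵥ y) = (Lh *ᵥ y) ⬝ᵥ (Lh *ᵥ y) := by
      rw [← mulVec_mulVec, dotProduct_mulVec, vecMul_transpose]
    have h3' : x ⬝ᵥ ((Lᵀ * L) *ᵥ x) = (L *ᵥ x) ⬝ᵥ (L *ᵥ x) := by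
      rw [← mulVec_mulVec, dotProduct_mulVec, vecMul_transpose]
    -- contraction: ‖Vᵀ z‖² ≤ ‖z‖²
    have h5 : ∀ z : Fin N → ℝ, (Vᵀ *ᵥ z) ⬝ᵥ (Vᵀ *ᵥ z) ≤ z ⬝ᵥ z := by
      intro z
      have hw : 0 ≤ (z - V *ᵥ (Vᵀ *ᵥ z)) ⬝ᵥ (z - V *ᵥ (Vᵀ *ᵥ z)) := by
        apply Finset.sum_nonneg
        intro i _
        exact mul_self_nonneg _
      have e1 : (V *ᵥ (Vᵀ *ᵥ z)) ⬝ᵥ (V *ᵥ (Vᵀ *ᵥ z)) = (Vᵀ *ᵥ z) ⬝ᵥ (Vᵀ *ᵥ z) :=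
        hVV _ _
      have e2 : z ⬝ᵥ (V *ᵥ (Vᵀ *ᵥ z)) = (Vᵀ *ᵥ z) ⬝ᵥ (Vᵀ *ᵥ z) := by
        rw [dotProduct_mulVec, ← mulVec_transpose]
      have e3 : (V *ᵥ (Vᵀ *ᵥ z)) ⬝ᵥ z = (Vᵀ *ᵥ z) ⬝ᵥ (Vᵀ *ᵥ z) := by
        rw [dotProduct_comm, e2]
      simp only [sub_dotProduct, dotProduct_sub, e1, e2, e3] at hw
      linarith
    have hbase := hpsd.dotProduct_mulVec_nonneg x
    simp only [star_trivial, sub_mulVec, add_mulVec, smul_mulVec,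
      dotProduct_sub, dotProduct_add, dotProduct_smul, smul_eq_mul] at hbase ⊢
    have hle : (Lh *ᵥ y) ⬝ᵥ (Lh *ᵥ y) ≤ (L *ᵥ x) ⬝ᵥ (L *ᵥ x) := by
      rw [h4]; exact h5 _
    have hmul : μb * ((Lh *ᵥ y) ⬝ᵥ (Lh *ᵥ y)) ≤ μb * ((L *ᵥ x) ⬝ᵥ (L *ᵥ x)) :=
      mul_le_mul_of_nonneg_left hle hμb.le
    rw [h3] at *
    rw [h3'] at hbase
    linarith [h1, h2]
end

section
/- Let A ∈ ℝ^{n×n} be such that, viewed as a complex matrix, A is diagonalizable and every eigenvalue of A has modulus 1, and let B ∈ ℝ^{n×m}. Then there exists a symmetric positive definite matrix X ∈ ℝ^{n×n} such that (a) X = AᵀXA and (b) I_m − BᵀXB is positive semidefinite. -/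
open Matrix

lemma mapReMulLeft {n k : ℕ} (N : Matrix (Fin n) (Fin k) ℝ) (M : Matrix (Fin k) (Fin n) ℂ) :
    ((N.map Complex.ofReal) * M).map Complex.re = N * M.map Complex.re := by
  ext i j
  simp [Matrix.mul_apply, Complex.re_sum, Complex.mul_re]

lemma mapReMulRight {n k : ℕ} (M : Matrix (Fin n) (Fin k) ℂ) (N : Matrix (Fin k) (Fin n) ℝ) :
    (M * (N.map Complex.ofReal)).map Complex.re = M.map Complex.re * N := by
  ext i j
  simp [Matrix.mul_apply, Complex.re_sum, Complex.mul_re]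

lemma quadLeTrace {m : ℕ} {M : Matrix (Fin m) (Fin m) ℝ} (hM : M.PosSemidef)
    (x : Fin m → ℝ) : x ⬝ᵥ M *ᵥ x ≤ M.trace * (x ⬝ᵥ x) := by
  obtain ⟨C, rfl⟩ : ∃ C : Matrix (Fin m) (Fin m) ℝ, M = Cᴴ * C := by
    open scoped MatrixOrder in
    obtain ⟨C, hC⟩ := CStarAlgebra.nonneg_iff_eq_star_mul_self.mp (Matrix.nonneg_iff_posSemidef.mpr hM)
    exact ⟨C, hC⟩
  have h1 : x ⬝ᵥ (Cᴴ * C) *ᵥ x = (C *ᵥ x) ⬝ᵥ (C *ᵥ x) := by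
    rw [← Matrix.mulVec_mulVec, Matrix.dotProduct_mulVec, Matrix.vecMul_conjTranspose]
    simp
  have h2 : (Cᴴ * C).trace = ∑ k, ∑ i, C i k ^ 2 := by
    simp [Matrix.trace, Matrix.diag, Matrix.mul_apply, sq]
  rw [h1, h2]
  have h3 : (C *ᵥ x) ⬝ᵥ (C *ᵥ x) = ∑ i, (∑ j, C i j * x j) ^ 2 := by
    simp [dotProduct, Matrix.mulVec, sq]
  rw [h3]
  have h4 : ∀ i : Fin m, (∑ j, C i j * x j) ^ 2 ≤ (∑ j, C i j ^ 2) * (∑ j, x j ^ 2) :=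
    fun i => Finset.sum_mul_sq_le_sq_mul_sq Finset.univ (C i) x
  calc ∑ i, (∑ j, C i j * x j) ^ 2 ≤ ∑ i, (∑ j, C i j ^ 2) * (∑ j, x j ^ 2) :=
        Finset.sum_le_sum fun i _ => h4 i
    _ = (∑ k, ∑ i, C i k ^ 2) * (x ⬝ᵥ x) := by
        rw [← Finset.sum_mul, Finset.sum_comm]
        simp [dotProduct, sq]

/-- Lemma 2 (existence part): for a neutrally stable `A` (diagonalizable over
`ℂ` with all eigenvalues of modulus 1) there exists a symmetric positive
definite `X` with `X = AᵀXA` and `I − BᵀXB ⪰ 0`. -/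
theorem stmt4 (n m : ℕ)
    (A : Matrix (Fin n) (Fin n) ℝ) (B : Matrix (Fin n) (Fin m) ℝ)
    (hdiag : ∃ P : Matrix (Fin n) (Fin n) ℂ, IsUnit P ∧
      (P⁻¹ * A.map Complex.ofReal * P).IsDiag)
    (hspec : ∀ c ∈ spectrum ℂ (A.map Complex.ofReal), ‖c‖ = 1) :
    ∃ X : Matrix (Fin n) (Fin n) ℝ, X.PosDef ∧ X = Aᵀ * X * A ∧
      ((1 : Matrix (Fin m) (Fin m) ℝ) - Bᵀ * X * B).PosSemidef := by
  classical
  obtain ⟨P, hP, hDiag⟩ := hdiag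
  set Ac := A.map Complex.ofReal with hAcdef
  set D := P⁻¹ * Ac * P with hDdef
  set d : Fin n → ℂ := fun i => D i i with hddef
  have hPdet : IsUnit P.det := (Matrix.isUnit_iff_isUnit_det P).mp hP
  have hPP : P * P⁻¹ = 1 := Matrix.mul_nonsing_inv P hPdet
  have hPP' : P⁻¹ * P = 1 := Matrix.nonsing_inv_mul P hPdet
  have hDd : D = Matrix.diagonal d := hDiag.diagonal_diag.symm
  have hspecD : spectrum ℂ D = spectrum ℂ Ac := by
    rw [hDdef, ← hP.unit_spec, ← Matrix.coe_units_inv]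
    exact spectrum.units_conjugate'
  have hnorm : ∀ i, ‖d i‖ = 1 := by
    intro i
    apply hspec
    rw [← hspecD, hDd, spectrum_diagonal]
    exact ⟨i, rfl⟩
  have hDunit : Dᴴ * D = 1 := by
    rw [hDd, Matrix.diagonal_conjTranspose, Matrix.diagonal_mul_diagonal]
    have h1 : (star d * d) = fun _ => (1 : ℂ) := by
      funext i
      simp only [Pi.mul_apply, Pi.star_apply, Complex.star_def, RCLike.conj_mul, hnorm i]
      norm_num
    have h2 : (fun i => star d i * d i) = fun _ => (1 : ℂ) := h1
    rw [h2, Matrix.diagonal_one]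
  have hA' : Ac = P * D * P⁻¹ := by
    rw [hDdef, ← Matrix.mul_assoc, ← Matrix.mul_assoc, hPP, Matrix.one_mul,
      Matrix.mul_assoc, hPP, Matrix.mul_one]
  set Q := P⁻¹ with hQdef
  set Xc := Qᴴ * Q with hXcdef
  have e2 : ∀ M : Matrix (Fin n) (Fin n) ℂ, Q * (P * M) = M := fun M => by
    rw [← Matrix.mul_assoc, hPP', Matrix.one_mul]
  have e3 : ∀ M : Matrix (Fin n) (Fin n) ℂ, Pᴴ * (Qᴴ * M) = M := fun M => by
    rw [← Matrix.mul_assoc, ← Matrix.conjTranspose_mul, hPP', Matrix.conjTranspose_one,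
      Matrix.one_mul]
  have e4 : ∀ M : Matrix (Fin n) (Fin n) ℂ, Dᴴ * (D * M) = M := fun M => by
    rw [← Matrix.mul_assoc, hDunit, Matrix.one_mul]
  have key : Acᴴ * Xc * Ac = Xc := by
    rw [hA', hXcdef]
    simp only [Matrix.conjTranspose_mul, Matrix.mul_assoc, e2, e3, e4]
  -- transfer to the real part
  have hAcH : Acᴴ = Aᵀ.map Complex.ofReal := by
    ext i j
    simp [hAcdef, Matrix.conjTranspose_apply, Complex.conj_ofReal]
  have key2 : (Aᵀ.map Complex.ofReal) * Xc * (A.map Complex.ofReal) = Xc := by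
    rw [← hAcH, ← hAcdef]; exact key
  set Xr := Xc.map Complex.re with hXrdef
  have hXrEq : Aᵀ * Xr * A = Xr := by
    calc Aᵀ * Xr * A = ((Aᵀ.map Complex.ofReal * Xc).map Complex.re) * A := by
          rw [mapReMulLeft]
      _ = ((Aᵀ.map Complex.ofReal * Xc) * (A.map Complex.ofReal)).map Complex.re :=
          (mapReMulRight _ _).symm
      _ = Xr := by rw [key2]
  have hXcH : Xcᴴ = Xc := by
    rw [hXcdef, Matrix.conjTranspose_mul, Matrix.conjTranspose_conjTranspose]
  have hXrSym : Xrᵀ = Xr := by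
    ext i j
    have h := congrFun (congrFun hXcH i) j
    simp only [Matrix.conjTranspose_apply] at h
    simp only [hXrdef, Matrix.transpose_apply, Matrix.map_apply, ← h, Complex.star_def,
      Complex.conj_re]
  have hXrH : Xr.IsHermitian := by
    show Xrᴴ = Xr
    rw [show Xrᴴ = Xrᵀ from by ext i j; simp [Matrix.conjTranspose_apply], hXrSym]
  -- positivity of Xr
  have hXrPos : ∀ x : Fin n → ℝ, x ≠ 0 → 0 < x ⬝ᵥ Xr *ᵥ x := by
    intro x hx
    set xc : Fin n → ℂ := fun i => (x i : ℂ) with hxcdef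
    have hxc : xc ≠ 0 := by
      intro h
      apply hx
      funext i
      have := congrFun h i
      simpa [hxcdef] using this
    set y := Q *ᵥ xc with hydef
    have hy : y ≠ 0 := by
      intro h
      apply hxc
      have h2 : P *ᵥ y = P *ᵥ 0 := by rw [h]
      rwa [hydef, Matrix.mulVec_mulVec, hPP, Matrix.one_mulVec, Matrix.mulVec_zero] at h2
    have hform : star xc ⬝ᵥ Xc *ᵥ xc = star y ⬝ᵥ y := by
      rw [hXcdef, ← Matrix.mulVec_mulVec, Matrix.dotProduct_mulVec,
        Matrix.vecMul_conjTranspose, star_star]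
    have hquad : x ⬝ᵥ Xr *ᵥ x = (star xc ⬝ᵥ Xc *ᵥ xc).re := by
      simp [dotProduct, Matrix.mulVec, hXrdef, hxcdef, Complex.re_sum,
        Finset.mul_sum, Complex.mul_re]
    have hre : (star y ⬝ᵥ y).re = ∑ i, Complex.normSq (y i) := by
      simp [dotProduct, Complex.re_sum, Complex.mul_re, Complex.normSq_apply]
    obtain ⟨i0, hi0⟩ := Function.ne_iff.mp hy
    rw [hquad, hform, hre]
    exact Finset.sum_pos' (fun i _ => Complex.normSq_nonneg _)
      ⟨i0, Finset.mem_univ _, Complex.normSq_pos.mpr hi0⟩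
  have hXrPD : Xr.PosDef := Matrix.posDef_iff_dotProduct_mulVec.mpr ⟨hXrH, fun x hx => by simpa using hXrPos x hx⟩
  -- scale
  have hBH : Bᴴ = Bᵀ := by ext i j; simp [Matrix.conjTranspose_apply]
  have hMps : (Bᵀ * Xr * B).PosSemidef := by
    rw [← hBH]
    exact hXrPD.posSemidef.conjTranspose_mul_mul_same B
  set t := (Bᵀ * Xr * B).trace with htdef
  set c : ℝ := (1 + t ^ 2)⁻¹ with hcdef
  have hc : 0 < c := by positivity
  have hct : c * t ≤ 1 := by
    rw [hcdef]
    rw [inv_mul_le_iff₀ (by positivity)]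
    nlinarith [sq_nonneg (t - 1)]
  have hsym : ∀ i j, Xr j i = Xr i j := fun i j => congrFun (congrFun hXrSym i) j
  have hsmul : Bᵀ * (c • Xr) * B = c • (Bᵀ * Xr * B) := by
    rw [Matrix.mul_smul, Matrix.smul_mul]
  have hdotnn : ∀ x : Fin m → ℝ, (0:ℝ) ≤ x ⬝ᵥ x := fun x =>
    Finset.sum_nonneg fun i _ => mul_self_nonneg _
  refine ⟨c • Xr, Matrix.posDef_iff_dotProduct_mulVec.mpr ⟨?_, ?_⟩, ?_, ?_⟩
  · show (c • Xr)ᴴ = c • Xr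
    ext i j
    simp only [Matrix.conjTranspose_apply, Matrix.smul_apply, star_trivial, hsym i j]
  · intro x hx
    have h : star x ⬝ᵥ (c • Xr) *ᵥ x = c * (x ⬝ᵥ Xr *ᵥ x) := by
      simp [Matrix.smul_mulVec, dotProduct_smul, smul_eq_mul]
    rw [h]
    exact mul_pos hc (hXrPos x hx)
  · rw [Matrix.mul_smul, Matrix.smul_mul, hXrEq]
  · rw [hsmul]
    refine Matrix.posSemidef_iff_dotProduct_mulVec.mpr ⟨?_, ?_⟩
    · refine Matrix.isHermitian_one.sub ?_
      show (c • (Bᵀ * Xr * B))ᴴ = c • (Bᵀ * Xr * B)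
      ext i j
      have := congrFun (congrFun hMps.1 i) j
      simp only [Matrix.conjTranspose_apply, star_trivial] at this ⊢
      simp only [Matrix.smul_apply, this]
    · intro x
      have expand : star x ⬝ᵥ (1 - c • (Bᵀ * Xr * B)) *ᵥ x
          = x ⬝ᵥ x - c * (x ⬝ᵥ (Bᵀ * Xr * B) *ᵥ x) := by
        rw [Matrix.sub_mulVec, star_trivial, dotProduct_sub, Matrix.one_mulVec,
          Matrix.smul_mulVec, dotProduct_smul, smul_eq_mul]
      rw [expand]
      have hb := quadLeTrace hMps x
      have h1 : c * (x ⬝ᵥ (Bᵀ * Xr * B) *ᵥ x) ≤ c * (t * (x ⬝ᵥ x)) :=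
        mul_le_mul_of_nonneg_left hb hc.le
      have h2 : c * (t * (x ⬝ᵥ x)) ≤ x ⬝ᵥ x := by
        rw [← mul_assoc]
        simpa using mul_le_mul_of_nonneg_right hct (hdotnn x)
      linarith
end

section
/- Let A ∈ ℝ^{n×n}, B ∈ ℝ^{n×m}, and let X ∈ ℝ^{n×n} be symmetric with X = AᵀXA. Set F = BᵀXA and, for z ∈ ℂ such that zI − A is invertible (all matrices regarded as complex matrices), set G(z) = F(zI − A)^{−1}B. Then G(z)* + G(z) + BᵀXB = (|z|² − 1) · [(zI − A)^{−1}B]* X [(zI − A)^{−1}B], where * denotes conjugate transpose. -/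
open Matrix

lemma mapCT {K L : Type} [Fintype K] [Fintype L] (M : Matrix K L ℝ) :
    (M.map Complex.ofReal)ᴴ = Mᵀ.map Complex.ofReal := by
  ext i j; simp [conjTranspose_apply, Complex.conj_ofReal]

lemma mapMul {K L P : Type} [Fintype L] (M : Matrix K L ℝ) (N : Matrix L P ℝ) :
    (M * N).map Complex.ofReal = M.map Complex.ofReal * N.map Complex.ofReal := by
  ext i j; simp [Matrix.mul_apply, Matrix.map_apply]

lemma normSqC (z : ℂ) : ((‖z‖ ^ 2 : ℝ) : ℂ) = star z * z := by
  rw [← Complex.normSq_eq_norm_sq, Complex.normSq_eq_conj_mul_self]; rfl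

/-- The key algebraic identity in the proof of Lemma 2: with `X = AᵀXA`
symmetric and `F = BᵀXA`, for `G(z) = F(zI − A)⁻¹B` (over `ℂ`) one has
`G(z)* + G(z) + BᵀXB = (|z|² − 1)·[(zI − A)⁻¹B]* X [(zI − A)⁻¹B]`. -/
theorem stmt5 (n m : ℕ)
    (A : Matrix (Fin n) (Fin n) ℝ) (B : Matrix (Fin n) (Fin m) ℝ)
    (X : Matrix (Fin n) (Fin n) ℝ) (hXsym : Xᵀ = X) (hXA : X = Aᵀ * X * A)
    (F : Matrix (Fin m) (Fin n) ℝ) (hF : F = Bᵀ * X * A)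
    (z : ℂ)
    (Ac : Matrix (Fin n) (Fin n) ℂ) (hAc : Ac = A.map Complex.ofReal)
    (Bc : Matrix (Fin n) (Fin m) ℂ) (hBc : Bc = B.map Complex.ofReal)
    (Fc : Matrix (Fin m) (Fin n) ℂ) (hFc : Fc = F.map Complex.ofReal)
    (Xc : Matrix (Fin n) (Fin n) ℂ) (hXc : Xc = X.map Complex.ofReal)
    (hz : IsUnit (z • (1 : Matrix (Fin n) (Fin n) ℂ) - Ac))
    (G : Matrix (Fin m) (Fin m) ℂ)
    (hG : G = Fc * (z • (1 : Matrix (Fin n) (Fin n) ℂ) - Ac)⁻¹ * Bc) :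
    Gᴴ + G + (Bᵀ * X * B).map Complex.ofReal =
      ((‖z‖ ^ 2 - 1 : ℝ) : ℂ) •
        (((z • (1 : Matrix (Fin n) (Fin n) ℂ) - Ac)⁻¹ * Bc)ᴴ * Xc *
          ((z • (1 : Matrix (Fin n) (Fin n) ℂ) - Ac)⁻¹ * Bc)) := by
  set M : Matrix (Fin n) (Fin n) ℂ := z • (1 : Matrix (Fin n) (Fin n) ℂ) - Ac with hM
  set W : Matrix (Fin n) (Fin m) ℂ := M⁻¹ * Bc with hW
  have hdet : IsUnit M.det := (Matrix.isUnit_iff_isUnit_det M).mp hz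
  have hMW : M * M⁻¹ = 1 := Matrix.mul_nonsing_inv M hdet
  have hBW : Bc = M * W := by rw [hW, ← Matrix.mul_assoc, hMW, Matrix.one_mul]
  have hXcH : Xcᴴ = Xc := by rw [hXc, mapCT, hXsym]
  have hAcH : Acᴴ = Aᵀ.map Complex.ofReal := by rw [hAc, mapCT]
  have hXAc : Acᴴ * Xc * Ac = Xc := by
    rw [hAcH, hXc, hAc, ← mapMul, ← mapMul, ← hXA]
  have hMH : Mᴴ = star z • (1 : Matrix (Fin n) (Fin n) ℂ) - Acᴴ := by
    rw [hM, conjTranspose_sub, conjTranspose_smul, conjTranspose_one]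
  have hBcH : Bcᴴ = Bᵀ.map Complex.ofReal := by rw [hBc, mapCT]
  have hFcH : Fcᴴ = Acᴴ * Xc * Bc := by
    rw [hFc, hF, mapMul, mapMul, conjTranspose_mul, conjTranspose_mul,
      ← hXc, hXcH, ← hAc, mapCT, Matrix.transpose_transpose, ← hBc, ← Matrix.mul_assoc]
  have hFcc : Fc = Bcᴴ * Xc * Ac := by
    rw [hFc, hF, mapMul, mapMul, ← hXc, ← hAc, hBcH]
  have h2 : ((‖z‖ ^ 2 - 1 : ℝ) : ℂ) = star z * z - 1 := by
    rw [Complex.ofReal_sub, Complex.ofReal_one, normSqC]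
  have key : Acᴴ * Xc * M + Mᴴ * Xc * Ac + Mᴴ * Xc * M
      = ((‖z‖ ^ 2 - 1 : ℝ) : ℂ) • Xc := by
    rw [h2, hMH, hM]
    simp only [Matrix.sub_mul, Matrix.mul_sub, Matrix.smul_mul, Matrix.mul_smul,
      Matrix.one_mul, Matrix.mul_one, smul_smul, sub_smul, one_smul, smul_sub]
    rw [hXAc]
    module
  have hsum : Wᴴ * (Acᴴ * Xc * M) * W + Wᴴ * (Mᴴ * Xc * Ac) * W + Wᴴ * (Mᴴ * Xc * M) * W
      = ((‖z‖ ^ 2 - 1 : ℝ) : ℂ) • (Wᴴ * Xc * W) := by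
    rw [show ∀ P Q R : Matrix (Fin n) (Fin n) ℂ,
        Wᴴ * P * W + Wᴴ * Q * W + Wᴴ * R * W = Wᴴ * (P + Q + R) * W from
        fun P Q R => by simp only [Matrix.mul_add, Matrix.add_mul]]
    rw [key, Matrix.mul_smul, Matrix.smul_mul]
  have hGW : G = Wᴴ * (Mᴴ * Xc * Ac) * W := by
    rw [hG, Matrix.mul_assoc, ← hW, hFcc, hBW, conjTranspose_mul]
    simp only [Matrix.mul_assoc]
  have hGH : Gᴴ = Wᴴ * (Acᴴ * Xc * M) * W := by
    rw [hG, Matrix.mul_assoc, ← hW, conjTranspose_mul, hFcH, hBW, conjTranspose_mul]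
    simp only [Matrix.mul_assoc]
  have hBXB : (Bᵀ * X * B).map Complex.ofReal = Wᴴ * (Mᴴ * Xc * M) * W := by
    rw [mapMul, mapMul, ← hXc, ← hBc, ← hBcH, hBW, conjTranspose_mul]
    simp only [Matrix.mul_assoc]
  rw [hGH, hGW, hBXB, hsum]
end

section
/- Let A ∈ ℝ^{n×n}, B ∈ ℝ^{n×m}, and let X ∈ ℝ^{n×n} be symmetric positive definite with X = AᵀXA and I_m − BᵀXB positive semidefinite. Set F = BᵀXA and G(z) = F(zI − A)^{−1}B. Then for every z ∈ ℂ with |z| > 1, the matrix zI − A is invertible and the Hermitian matrix G(z)* + G(z) + I_m is positive semidefinite; that is, G(z) + (1/2)I_m is positive real on |z| > 1. -/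
open Matrix
open scoped ComplexOrder

private lemma mapc_mul {a b c : ℕ} (P : Matrix (Fin a) (Fin b) ℝ) (Q : Matrix (Fin b) (Fin c) ℝ) :
    (P * Q).map Complex.ofReal = P.map Complex.ofReal * Q.map Complex.ofReal := by
  ext i j
  simp [Matrix.mul_apply]

private lemma psd_mapc {k : ℕ} {M : Matrix (Fin k) (Fin k) ℝ} (h : M.PosSemidef) :
    (M.map Complex.ofReal).PosSemidef := by
  obtain ⟨C, rfl⟩ : ∃ C : Matrix (Fin k) (Fin k) ℝ, M = Cᴴ * C := by
    open MatrixOrder in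
    have h0 : (0 : Matrix (Fin k) (Fin k) ℝ) ≤ M := Matrix.nonneg_iff_posSemidef.mpr h
    have hs : IsSelfAdjoint (CFC.sqrt M) := (CFC.sqrt_nonneg M).isSelfAdjoint
    refine ⟨CFC.sqrt M, ?_⟩
    have hsC : (CFC.sqrt M)ᴴ = CFC.sqrt M := hs
    rw [hsC, CFC.sqrt_mul_sqrt_self M h0]
  rw [mapc_mul]
  have hC : Cᴴ.map Complex.ofReal = (C.map Complex.ofReal)ᴴ := by
    ext i j
    simp [conjTranspose_apply, Complex.conj_ofReal]
  rw [hC]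
  exact Matrix.posSemidef_conjTranspose_mul_self _

/-- Lemma 2 (positive-real claim): with `X ≻ 0`, `X = AᵀXA`,
`I − BᵀXB ⪰ 0` and `F = BᵀXA`, for every `|z| > 1` the matrix `zI − A` is
invertible and `G(z)* + G(z) + I ⪰ 0`, i.e., `G(z) + ½I` is positive real. -/
theorem stmt6 (n m : ℕ)
    (A : Matrix (Fin n) (Fin n) ℝ) (B : Matrix (Fin n) (Fin m) ℝ)
    (X : Matrix (Fin n) (Fin n) ℝ) (hX : X.PosDef) (hXA : X = Aᵀ * X * A)
    (hXB : ((1 : Matrix (Fin m) (Fin m) ℝ) - Bᵀ * X * B).PosSemidef)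
    (F : Matrix (Fin m) (Fin n) ℝ) (hF : F = Bᵀ * X * A)
    (Ac : Matrix (Fin n) (Fin n) ℂ) (hAc : Ac = A.map Complex.ofReal)
    (Bc : Matrix (Fin n) (Fin m) ℂ) (hBc : Bc = B.map Complex.ofReal)
    (Fc : Matrix (Fin m) (Fin n) ℂ) (hFc : Fc = F.map Complex.ofReal) :
    ∀ z : ℂ, 1 < ‖z‖ →
      IsUnit (z • (1 : Matrix (Fin n) (Fin n) ℂ) - Ac) ∧
      ((Fc * (z • (1 : Matrix (Fin n) (Fin n) ℂ) - Ac)⁻¹ * Bc)ᴴ +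
        Fc * (z • (1 : Matrix (Fin n) (Fin n) ℂ) - Ac)⁻¹ * Bc +
        (1 : Matrix (Fin m) (Fin m) ℂ)).PosSemidef := by
  intro z hz
  set Xc : Matrix (Fin n) (Fin n) ℂ := X.map Complex.ofReal with hXc
  set M : Matrix (Fin n) (Fin n) ℂ := z • (1 : Matrix (Fin n) (Fin n) ℂ) - Ac with hM
  -- basic conjugation facts
  have hAH : Acᴴ = Acᵀ := by
    subst hAc; ext i j; simp [conjTranspose_apply, Complex.conj_ofReal]
  have hBH : Bcᴴ = Bcᵀ := by
    subst hBc; ext i j; simp [conjTranspose_apply, Complex.conj_ofReal]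
  have hXcH : Xcᴴ = Xc := by
    ext i j
    have hsym : X j i = X i j := by
      conv_lhs => rw [← hX.1]
      simp [conjTranspose_apply]
    simp [hXc, conjTranspose_apply, Complex.conj_ofReal, hsym]
  -- complexified identities
  have hXAc : Acᴴ * Xc * Ac = Xc := by
    rw [hAH, hAc, hXc, ← Matrix.transpose_map, ← mapc_mul, ← mapc_mul, ← hXA]
  have hFcEq : Fc = Bcᴴ * Xc * Ac := by
    rw [hBH, hFc, hF, hAc, hBc, hXc, mapc_mul, mapc_mul, Matrix.transpose_map]
  have hXcpsd : Xc.PosSemidef := psd_mapc hX.posSemidef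
  have hXBc : ((1 : Matrix (Fin m) (Fin m) ℂ) - Bcᴴ * Xc * Bc).PosSemidef := by
    have hps := psd_mapc hXB
    have h1 : ((1 : Matrix (Fin m) (Fin m) ℝ) - Bᵀ * X * B).map Complex.ofReal
        = (1 : Matrix (Fin m) (Fin m) ℝ).map Complex.ofReal - (Bᵀ * X * B).map Complex.ofReal := by
      ext i j
      simp only [Matrix.map_apply, Matrix.sub_apply, Complex.ofReal_sub]
    have h2 : (1 : Matrix (Fin m) (Fin m) ℝ).map Complex.ofReal
        = (1 : Matrix (Fin m) (Fin m) ℂ) := by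
      ext i j
      simp only [Matrix.map_apply, Matrix.one_apply]
      split_ifs <;> simp
    rw [h1, h2, mapc_mul, mapc_mul, Matrix.transpose_map, ← hBc, ← hXc, ← hBH] at hps
    exact hps
  have hdetXc : Xc.det ≠ 0 := by
    have : Xc.det = (X.det : ℂ) := by
      rw [hXc]; exact (RingHom.map_det Complex.ofRealHom X).symm
    rw [this]
    exact_mod_cast ne_of_gt hX.det_pos
  -- |z|² facts
  have hzz : (starRingEnd ℂ) z * z = ((‖z‖ ^ 2 : ℝ) : ℂ) := by
    rw [mul_comm, Complex.mul_conj]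
    norm_cast
    exact Complex.normSq_eq_norm_sq z
  have hz1 : (0 : ℂ) ≤ (starRingEnd ℂ) z * z - 1 := by
    rw [hzz]
    have h1 : ((1 : ℝ) : ℂ) = 1 := by norm_num
    rw [← h1, ← Complex.ofReal_sub, Complex.zero_le_real]
    nlinarith [hz]
  have hzne : (starRingEnd ℂ) z * z - 1 ≠ 0 := by
    rw [hzz]
    have h1 : ((1 : ℝ) : ℂ) = 1 := by norm_num
    rw [← h1, ← Complex.ofReal_sub]
    simp only [ne_eq, Complex.ofReal_eq_zero]
    nlinarith [hz]
  -- the key quadratic identity: q (Ac v) (Ac w) = q v w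
  have hq : ∀ v w : Fin n → ℂ,
      star (Ac *ᵥ v) ⬝ᵥ (Xc *ᵥ (Ac *ᵥ w)) = star v ⬝ᵥ (Xc *ᵥ w) := by
    intro v w
    rw [star_mulVec, mulVec_mulVec, dotProduct_mulVec, vecMul_vecMul, ← Matrix.mul_assoc, hXAc,
      ← dotProduct_mulVec]
  -- conjugation of the quadratic form
  have key_star : ∀ x y : Fin n → ℂ,
      star (star x ⬝ᵥ (Xc *ᵥ y)) = star y ⬝ᵥ (Xc *ᵥ x) := by
    intro x y
    rw [← star_dotProduct, star_mulVec, hXcH, ← dotProduct_mulVec]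
  -- invertibility
  have hMinv : IsUnit M := by
    rw [Matrix.isUnit_iff_isUnit_det, isUnit_iff_ne_zero]
    intro hdet
    obtain ⟨v, hv, hMv⟩ := (Matrix.exists_mulVec_eq_zero_iff.mpr hdet)
    have hAv : Ac *ᵥ v = z • v := by
      have h0 : z • v - Ac *ᵥ v = 0 := by
        calc z • v - Ac *ᵥ v = M *ᵥ v := by
              rw [hM, sub_mulVec, smul_mulVec, one_mulVec]
          _ = 0 := hMv
      exact (sub_eq_zero.mp h0).symm
    have h1 : ((starRingEnd ℂ) z * z) * (star v ⬝ᵥ (Xc *ᵥ v)) = star v ⬝ᵥ (Xc *ᵥ v) := by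
      have hqv := hq v v
      rw [hAv] at hqv
      simp only [star_smul, smul_dotProduct, mulVec_smul, dotProduct_smul, Complex.star_def,
        smul_eq_mul] at hqv
      linear_combination hqv
    have h2 : star v ⬝ᵥ (Xc *ᵥ v) = 0 := by
      have h' : ((starRingEnd ℂ) z * z - 1) * (star v ⬝ᵥ (Xc *ᵥ v)) = 0 := by
        linear_combination h1
      rcases mul_eq_zero.mp h' with h | h
      · exact absurd h hzne
      · exact h
    have h3 : Xc *ᵥ v = 0 := (hXcpsd.dotProduct_mulVec_zero_iff v).mp h2
    exact hdetXc (Matrix.exists_mulVec_eq_zero_iff.mp ⟨v, hv, h3⟩)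
  refine ⟨hMinv, Matrix.PosSemidef.of_dotProduct_mulVec_nonneg ?_ ?_⟩
  · -- Hermitian
    show _ᴴ = _
    rw [conjTranspose_add, conjTranspose_add, conjTranspose_conjTranspose, conjTranspose_one]
    abel
  · -- quadratic form nonneg
    intro u
    have hdetM : IsUnit M.det := (Matrix.isUnit_iff_isUnit_det M).mp hMinv
    set w : Fin n → ℂ := M⁻¹ *ᵥ (Bc *ᵥ u) with hw
    have hBu : Bc *ᵥ u = z • w - Ac *ᵥ w := by
      have h0 : M *ᵥ w = Bc *ᵥ u := by
        rw [hw, mulVec_mulVec, Matrix.mul_nonsing_inv _ hdetM, one_mulVec]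
      rw [← h0, hM, sub_mulVec, smul_mulVec, one_mulVec]
    set r1 : ℂ := star w ⬝ᵥ (Xc *ᵥ w) with hr1
    set r2 : ℂ := star w ⬝ᵥ (Xc *ᵥ (Ac *ᵥ w)) with hr2
    set r3 : ℂ := star (Ac *ᵥ w) ⬝ᵥ (Xc *ᵥ w) with hr3
    have hr1nn : 0 ≤ r1 := hXcpsd.dotProduct_mulVec_nonneg w
    have hstar_r1 : star r1 = r1 := key_star w w
    have hstar_r2 : star r2 = r3 := key_star w (Ac *ᵥ w)
    -- G *ᵥ u = Fc *ᵥ w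
    have hGu : (Fc * M⁻¹ * Bc) *ᵥ u = Fc *ᵥ w := by
      rw [hw, ← mulVec_mulVec, ← mulVec_mulVec]
    have ha : star u ⬝ᵥ (Fc *ᵥ w) = (starRingEnd ℂ) z * r2 - r1 := by
      have h1 : star u ⬝ᵥ (Fc *ᵥ w) = star (Bc *ᵥ u) ⬝ᵥ (Xc *ᵥ (Ac *ᵥ w)) := by
        rw [hFcEq, ← mulVec_mulVec, ← mulVec_mulVec, dotProduct_mulVec, ← star_mulVec]
      rw [h1, hBu, star_sub, star_smul, sub_dotProduct, smul_dotProduct, hq w w,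
        Complex.star_def, smul_eq_mul]
    have hc : star (Bc *ᵥ u) ⬝ᵥ (Xc *ᵥ (Bc *ᵥ u)) =
        ((starRingEnd ℂ) z * z) * r1 - (starRingEnd ℂ) z * r2 - z * r3 + r1 := by
      rw [hBu]
      simp only [star_sub, star_smul, mulVec_sub, mulVec_smul, sub_dotProduct, dotProduct_sub,
        smul_dotProduct, dotProduct_smul, smul_eq_mul, Complex.star_def]
      rw [hq w w]
      simp only [← hr1, ← hr2, ← hr3]
      ring
    have hub : star (Bc *ᵥ u) ⬝ᵥ (Xc *ᵥ (Bc *ᵥ u)) ≤ star u ⬝ᵥ u := by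
      have h0 := hXBc.dotProduct_mulVec_nonneg u
      have he : star u ⬝ᵥ (((1 : Matrix (Fin m) (Fin m) ℂ) - Bcᴴ * Xc * Bc) *ᵥ u)
          = star u ⬝ᵥ u - star (Bc *ᵥ u) ⬝ᵥ (Xc *ᵥ (Bc *ᵥ u)) := by
        rw [sub_mulVec, dotProduct_sub, one_mulVec]
        congr 1
        rw [← mulVec_mulVec, ← mulVec_mulVec, dotProduct_mulVec, ← star_mulVec]
      rw [he] at h0
      exact sub_nonneg.mp h0
    have hherm : star u ⬝ᵥ ((Fc * M⁻¹ * Bc)ᴴ *ᵥ u)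
        = star (star u ⬝ᵥ ((Fc * M⁻¹ * Bc) *ᵥ u)) := by
      rw [← star_dotProduct, star_mulVec, ← dotProduct_mulVec]
    have hstar_a : star ((starRingEnd ℂ) z * r2 - r1) = z * r3 - r1 := by
      rw [star_sub, star_mul', hstar_r1, hstar_r2, Complex.star_def, Complex.conj_conj]
    have hsplit : star u ⬝ᵥ (((Fc * M⁻¹ * Bc)ᴴ + Fc * M⁻¹ * Bc + 1) *ᵥ u)
        = (z * r3 - r1) + ((starRingEnd ℂ) z * r2 - r1) + star u ⬝ᵥ u := by
      rw [add_mulVec, add_mulVec, dotProduct_add, dotProduct_add, one_mulVec, hherm, hGu, ha,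
        hstar_a]
    rw [hsplit]
    have h9 : (0 : ℂ) ≤ (z * r3 - r1) + ((starRingEnd ℂ) z * r2 - r1)
        + star (Bc *ᵥ u) ⬝ᵥ (Xc *ᵥ (Bc *ᵥ u)) := by
      rw [hc]
      calc (0 : ℂ) ≤ ((starRingEnd ℂ) z * z - 1) * r1 := mul_nonneg hz1 hr1nn
        _ = _ := by ring
    exact le_trans h9 (add_le_add_right hub _)
end

section
/- Let A ∈ ℝ^{n×n}, B ∈ ℝ^{n×m}, and let X ∈ ℝ^{n×n} be symmetric positive definite with X = AᵀXA. Assume the pair (A,B) is reachable, i.e., for every w ∈ ℝⁿ, Bᵀ(Aᵀ)ᵏ w = 0 for all k ∈ ℕ implies w = 0. Set F = BᵀXA. Then the pair (F,A) is observable: for every v ∈ ℝⁿ, F Aᵏ v = 0 for all k ∈ ℕ implies v = 0. -/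
open Matrix

/-- Lemma 2 (observability claim): if `X ≻ 0` is symmetric with `X = AᵀXA`
and `(A,B)` is reachable, then the pair `(F,A)` with `F = BᵀXA` is
observable. -/
theorem stmt7 (n m : ℕ)
    (A : Matrix (Fin n) (Fin n) ℝ) (B : Matrix (Fin n) (Fin m) ℝ)
    (X : Matrix (Fin n) (Fin n) ℝ) (hX : X.PosDef) (hXA : X = Aᵀ * X * A)
    (hreach : ∀ w : Fin n → ℝ, (∀ k : ℕ, Bᵀ *ᵥ ((Aᵀ) ^ k *ᵥ w) = 0) → w = 0)
    (F : Matrix (Fin m) (Fin n) ℝ) (hF : F = Bᵀ * X * A) :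
    ∀ v : Fin n → ℝ, (∀ k : ℕ, F *ᵥ (A ^ k *ᵥ v) = 0) → v = 0 := by
  intro v hv
  have hdX : X.det ≠ 0 := ne_of_gt hX.det_pos
  have hdA : A.det ≠ 0 := by
    intro h0
    have h := congrArg Matrix.det hXA
    rw [det_mul, det_mul, det_transpose, h0, mul_zero] at h
    exact hdX h
  have hv1 : ∀ k : ℕ, (Bᵀ * X * A ^ (k + 1)) *ᵥ v = 0 := by
    intro k
    have h := hv k
    rw [hF, mulVec_mulVec] at h
    rw [pow_succ', ← Matrix.mul_assoc]
    exact h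
  have key : ∀ r : Polynomial ℝ, (Bᵀ * X * (Polynomial.aeval A r * A)) *ᵥ v = 0 := by
    intro r
    induction r using Polynomial.induction_on' with
    | add p q hp hq =>
      rw [map_add, add_mul, Matrix.mul_add, add_mulVec, hp, hq, add_zero]
    | monomial i a =>
      rw [Polynomial.aeval_monomial, Algebra.algebraMap_eq_smul_one, smul_mul_assoc,
        one_mul, smul_mul_assoc, ← pow_succ, Matrix.mul_smul, smul_mulVec,
        hv1 i, smul_zero]
  set p := A.charpoly with hp
  have hch : Polynomial.aeval A p = 0 := Matrix.aeval_self_charpoly A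
  have hc0 : p.coeff 0 ≠ 0 := by
    intro h0
    apply hdA
    rw [Matrix.det_eq_sign_charpoly_coeff, ← hp, h0, mul_zero]
  set q : Polynomial ℝ := Polynomial.C (-(p.coeff 0)⁻¹) * p.divX with hq
  have hqA : A * Polynomial.aeval A q = 1 := by
    have h1 : A * Polynomial.aeval A p.divX + (p.coeff 0) • (1 : Matrix (Fin n) (Fin n) ℝ) = 0 := by
      have h := congrArg (Polynomial.aeval A) (Polynomial.X_mul_divX_add p)
      rw [map_add, _root_.map_mul, Polynomial.aeval_X, Polynomial.aeval_C,
        Algebra.algebraMap_eq_smul_one, hch] at h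
      exact h
    have h2 : A * Polynomial.aeval A p.divX
        = -((p.coeff 0) • (1 : Matrix (Fin n) (Fin n) ℝ)) :=
      eq_neg_of_add_eq_zero_left h1
    rw [hq, _root_.map_mul, Polynomial.aeval_C, Algebra.algebraMap_eq_smul_one,
      smul_mul_assoc, one_mul, Matrix.mul_smul, h2, smul_neg, neg_smul, neg_neg,
      smul_smul, inv_mul_cancel₀ hc0, one_smul]
  have hAX : Aᵀ * X = X * Polynomial.aeval A q := by
    calc Aᵀ * X = Aᵀ * X * (A * Polynomial.aeval A q) := by rw [hqA, mul_one]
      _ = (Aᵀ * X * A) * Polynomial.aeval A q := by rw [← Matrix.mul_assoc]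
      _ = X * Polynomial.aeval A q := by rw [← hXA]
  have hiter : ∀ k : ℕ, (Aᵀ) ^ k * (X * A) = X * (Polynomial.aeval A (q ^ k) * A) := by
    intro k
    induction k with
    | zero => simp [Matrix.mul_assoc]
    | succ k ih =>
      calc (Aᵀ) ^ (k + 1) * (X * A) = Aᵀ * ((Aᵀ) ^ k * (X * A)) := by
            rw [pow_succ', Matrix.mul_assoc]
        _ = Aᵀ * (X * (Polynomial.aeval A (q ^ k) * A)) := by rw [ih]
        _ = (Aᵀ * X) * (Polynomial.aeval A (q ^ k) * A) := by rw [Matrix.mul_assoc]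
        _ = (X * Polynomial.aeval A q) * (Polynomial.aeval A (q ^ k) * A) := by rw [hAX]
        _ = X * (Polynomial.aeval A (q ^ (k + 1)) * A) := by
            conv_rhs => rw [pow_succ' q, _root_.map_mul]
            simp only [Matrix.mul_assoc]
  have hw : (X * A) *ᵥ v = 0 := by
    apply hreach
    intro k
    rw [mulVec_mulVec, mulVec_mulVec, Matrix.mul_assoc, hiter k, ← Matrix.mul_assoc]
    exact key (q ^ k)
  have hdXA : IsUnit (X * A).det := by
    rw [det_mul]; exact isUnit_iff_ne_zero.mpr (mul_ne_zero hdX hdA)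
  have h := congrArg (fun u => (X * A)⁻¹ *ᵥ u) hw
  simpa [mulVec_mulVec, Matrix.nonsing_inv_mul _ hdXA] using h
end
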